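/- arXiv:gr-qc/9903093 — 2 statements merged into one kernel-verified Lean document; each statement's English description precedes it below -/
import Mathlib

section
/- The general solution of the initial-value problem u·cot(θ)·∂x/∂u + ∂x/∂θ + k·cot(θ)·x = H(u, θ), x(1, θ) = F(θ), along the characteristic through (u, θ) with u = sin(θ)/sin(ξ), is x(u,θ) = u^(−k)·F(ξ) + csc^k(θ)·∫₀^(θ−ξ) H(sin(t+ξ)/sin ξ, t+ξ)·sin^k(t+ξ) dt, where ξ = arcsin(sin θ/u); verification: this formula satisfies the PDE where the inversion ξ(u,θ) is well-defined and smooth (i.e., where u ≠ sin θ and the characteristic map is invertible). -/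
set_option maxHeartbeats 1000000


open Real

open Real MeasureTheory intervalIntegral Set Metric

noncomputable section CharacteristicsAux

/-- integrand along characteristics -/
def gg (k : ℝ) (H : ℝ → ℝ → ℝ) (a y : ℝ) : ℝ :=
  H (Real.sin y / Real.sin a) y * Real.sin y ^ k

/-- partial derivative of `gg` in `a` -/
def gga (k : ℝ) (H : ℝ → ℝ → ℝ) (a y : ℝ) : ℝ :=
  (fderiv ℝ (fun p : ℝ × ℝ => H p.1 p.2) (Real.sin y / Real.sin a, y))
    (-(Real.sin y * Real.cos a) / Real.sin a ^ 2, 0) * Real.sin y ^ k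

/-- partial derivative of `gg` in `y` -/
def ggy (k : ℝ) (H : ℝ → ℝ → ℝ) (a y : ℝ) : ℝ :=
  (fderiv ℝ (fun p : ℝ × ℝ => H p.1 p.2) (Real.sin y / Real.sin a, y))
    (Real.cos y / Real.sin a, 1) * Real.sin y ^ k
  + H (Real.sin y / Real.sin a) y * (k * Real.sin y ^ (k - 1) * Real.cos y)

/-- rescaled integrand -/
def GG (k : ℝ) (H : ℝ → ℝ → ℝ) (a t s : ℝ) : ℝ := gg k H a ((t - a) * s + a)

theorem gg_hasDerivAt_comp (k : ℝ) (H : ℝ → ℝ → ℝ)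
    (hH : ContDiff ℝ 1 (fun p : ℝ × ℝ => H p.1 p.2))
    {f g : ℝ → ℝ} {f' g' t : ℝ} (hf : HasDerivAt f f' t) (hg : HasDerivAt g g' t)
    (ha : Real.sin (f t) ≠ 0) (hy : Real.sin (g t) ≠ 0) :
    HasDerivAt (fun t => gg k H (f t) (g t))
      (gga k H (f t) (g t) * f' + ggy k H (f t) (g t) * g') t := by
  set a := f t with hadef
  set y := g t with hydef
  have hsg : HasDerivAt (fun t => Real.sin (g t)) (Real.cos y * g') t :=
    (Real.hasDerivAt_sin y).comp t hg
  have hsf : HasDerivAt (fun t => Real.sin (f t)) (Real.cos a * f') t :=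
    (Real.hasDerivAt_sin a).comp t hf
  have hq : HasDerivAt (fun t => Real.sin (g t) / Real.sin (f t))
      ((Real.cos y * g' * Real.sin a - Real.sin y * (Real.cos a * f')) / Real.sin a ^ 2) t :=
    hsg.div hsf ha
  have hrho : HasDerivAt (fun t => (Real.sin (g t) / Real.sin (f t), g t))
      (((Real.cos y * g' * Real.sin a - Real.sin y * (Real.cos a * f')) / Real.sin a ^ 2, g')) t :=
    hq.prodMk hg
  have hH' : HasFDerivAt (fun p : ℝ × ℝ => H p.1 p.2)
      (fderiv ℝ (fun p : ℝ × ℝ => H p.1 p.2) (Real.sin y / Real.sin a, y))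
      (Real.sin y / Real.sin a, y) :=
    ((hH.differentiable one_ne_zero) _).hasFDerivAt
  have hc : HasDerivAt (fun t => H (Real.sin (g t) / Real.sin (f t)) (g t))
      ((fderiv ℝ (fun p : ℝ × ℝ => H p.1 p.2) (Real.sin y / Real.sin a, y))
        ((Real.cos y * g' * Real.sin a - Real.sin y * (Real.cos a * f')) / Real.sin a ^ 2, g')) t :=
    by have := hH'.comp_hasDerivAt t hrho; exact this
  have hp : HasDerivAt (fun t => Real.sin (g t) ^ k)
      (k * Real.sin y ^ (k - 1) * (Real.cos y * g')) t := by
    have h := (Real.hasDerivAt_rpow_const (x := Real.sin y) (p := k) (Or.inl hy)).comp t hsg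
    exact h
  have hmul := hc.mul hp
  have hvec : (((Real.cos y * g' * Real.sin a - Real.sin y * (Real.cos a * f')) / Real.sin a ^ 2 : ℝ),
        (g' : ℝ))
      = f' • ((-(Real.sin y * Real.cos a) / Real.sin a ^ 2 : ℝ), (0 : ℝ))
        + g' • ((Real.cos y / Real.sin a : ℝ), (1 : ℝ)) := by
    have h2 : Real.sin a ^ 2 ≠ 0 := pow_ne_zero _ ha
    apply Prod.ext
    · simp only [Prod.fst_add, Prod.smul_fst, smul_eq_mul]
      field_simp
      try ring
    · simp only [Prod.snd_add, Prod.smul_snd, smul_eq_mul]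
      ring
  rw [hvec, map_add, ContinuousLinearMap.map_smul, ContinuousLinearMap.map_smul] at hmul
  refine hmul.congr_deriv ?_
  simp only [gg, gga, ggy, smul_eq_mul]
  ring

theorem aux_continuousAt (k : ℝ) (H : ℝ → ℝ → ℝ)
    (hH : ContDiff ℝ 1 (fun p : ℝ × ℝ => H p.1 p.2))
    {p : ℝ × ℝ} (ha : Real.sin p.1 ≠ 0) (hy : Real.sin p.2 ≠ 0) :
    ContinuousAt (fun p : ℝ × ℝ => gg k H p.1 p.2) p ∧
    ContinuousAt (fun p : ℝ × ℝ => gga k H p.1 p.2) p ∧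
    ContinuousAt (fun p : ℝ × ℝ => ggy k H p.1 p.2) p := by
  have csf : ContinuousAt (fun p : ℝ × ℝ => Real.sin p.1) p :=
    (Real.continuous_sin.comp continuous_fst).continuousAt
  have css : ContinuousAt (fun p : ℝ × ℝ => Real.sin p.2) p :=
    (Real.continuous_sin.comp continuous_snd).continuousAt
  have ccf : ContinuousAt (fun p : ℝ × ℝ => Real.cos p.1) p :=
    (Real.continuous_cos.comp continuous_fst).continuousAt
  have ccs : ContinuousAt (fun p : ℝ × ℝ => Real.cos p.2) p :=
    (Real.continuous_cos.comp continuous_snd).continuousAt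
  have cq : ContinuousAt (fun p : ℝ × ℝ => Real.sin p.2 / Real.sin p.1) p := css.div csf ha
  have ccurve : ContinuousAt (fun p : ℝ × ℝ => (Real.sin p.2 / Real.sin p.1, p.2)) p :=
    cq.prodMk continuous_snd.continuousAt
  have cH : ContinuousAt (fun p : ℝ × ℝ => H (Real.sin p.2 / Real.sin p.1) p.2) p :=
    (hH.continuous.continuousAt (x := (Real.sin p.2 / Real.sin p.1, p.2))).comp
      (f := fun p : ℝ × ℝ => (Real.sin p.2 / Real.sin p.1, p.2)) ccurve
  have crpow : ContinuousAt (fun p : ℝ × ℝ => Real.sin p.2 ^ k) p :=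
    (Real.continuousAt_rpow_const _ _ (Or.inl hy)).comp (f := fun p : ℝ × ℝ => Real.sin p.2) css
  have crpow1 : ContinuousAt (fun p : ℝ × ℝ => Real.sin p.2 ^ (k - 1)) p :=
    (Real.continuousAt_rpow_const _ _ (Or.inl hy)).comp (f := fun p : ℝ × ℝ => Real.sin p.2) css
  have cfd : ContinuousAt
      (fun p : ℝ × ℝ => fderiv ℝ (fun p : ℝ × ℝ => H p.1 p.2) (Real.sin p.2 / Real.sin p.1, p.2)) p :=
    ((hH.continuous_fderiv one_ne_zero).continuousAt).comp ccurve
  have happ : ∀ (v : ℝ × ℝ → ℝ × ℝ), ContinuousAt v p →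
      ContinuousAt (fun p : ℝ × ℝ =>
        (fderiv ℝ (fun p : ℝ × ℝ => H p.1 p.2) (Real.sin p.2 / Real.sin p.1, p.2)) (v p)) p := by
    intro v hv
    exact isBoundedBilinearMap_apply.continuous.continuousAt.comp (cfd.prodMk hv)
  refine ⟨cH.mul crpow, ?_, ?_⟩
  · refine ContinuousAt.mul (happ _ ?_) crpow
    exact ((css.mul ccf).neg.div (csf.pow 2) (pow_ne_zero 2 ha)).prodMk continuousAt_const
  · refine ContinuousAt.add (ContinuousAt.mul (happ _ ?_) crpow) (cH.mul ?_)
    · exact (ccs.div csf ha).prodMk continuousAt_const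
    · exact (continuousAt_const.mul crpow1).mul ccs

/-- Differentiation under the integral sign for the family
`r ↦ ∫ s in 0..1, gg k H (a r) ((τ r - a r) * s + a r)`. -/
theorem param_hasDerivAt (k : ℝ) (H : ℝ → ℝ → ℝ)
    (hH : ContDiff ℝ 1 (fun p : ℝ × ℝ => H p.1 p.2))
    (a τ a' τ' : ℝ → ℝ) (r₀ ε : ℝ) (hε : 0 < ε)
    (hball : ∀ r ∈ closedBall r₀ ε, HasDerivAt a (a' r) r ∧ HasDerivAt τ (τ' r) r)
    (hca : ContinuousOn a' (closedBall r₀ ε)) (hcτ : ContinuousOn τ' (closedBall r₀ ε))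
    (hdoma : ∀ r ∈ closedBall r₀ ε, Real.sin (a r) ≠ 0)
    (hdom : ∀ r ∈ closedBall r₀ ε, ∀ s ∈ Icc (0:ℝ) 1,
      Real.sin ((τ r - a r) * s + a r) ≠ 0) :
    HasDerivAt (fun r => ∫ s in (0:ℝ)..1, gg k H (a r) ((τ r - a r) * s + a r))
      (∫ s in (0:ℝ)..1,
        (gga k H (a r₀) ((τ r₀ - a r₀) * s + a r₀) * a' r₀
          + ggy k H (a r₀) ((τ r₀ - a r₀) * s + a r₀) * ((τ' r₀ - a' r₀) * s + a' r₀)))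
      r₀ := by
  have hr₀ : r₀ ∈ closedBall r₀ ε := mem_closedBall_self hε.le
  have hIsub : Set.uIoc (0:ℝ) 1 ⊆ Icc (0:ℝ) 1 := by
    rw [uIoc_of_le zero_le_one]; exact Ioc_subset_Icc_self
  have hconta : ContinuousOn a (closedBall r₀ ε) := fun r hr =>
    ((hball r hr).1.continuousAt).continuousWithinAt
  have hcontτ : ContinuousOn τ (closedBall r₀ ε) := fun r hr =>
    ((hball r hr).2.continuousAt).continuousWithinAt
  set m : ℝ × ℝ → ℝ × ℝ := fun q => (a q.1, (τ q.1 - a q.1) * q.2 + a q.1) with hm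
  set K : Set (ℝ × ℝ) := closedBall r₀ ε ×ˢ Icc (0:ℝ) 1 with hK
  have hfstK : ∀ q ∈ K, q.1 ∈ closedBall r₀ ε := fun q hq => hq.1
  have hsndK : ∀ q ∈ K, q.2 ∈ Icc (0:ℝ) 1 := fun q hq => hq.2
  have hcontm : ContinuousOn m K := by
    have h1 : ContinuousOn (fun q : ℝ × ℝ => a q.1) K :=
      hconta.comp continuousOn_fst hfstK
    have h2 : ContinuousOn (fun q : ℝ × ℝ => τ q.1) K :=
      hcontτ.comp continuousOn_fst hfstK
    exact h1.prodMk (((h2.sub h1).mul continuousOn_snd).add h1)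
  have hmemS : ∀ q ∈ K, Real.sin (m q).1 ≠ 0 ∧ Real.sin (m q).2 ≠ 0 := fun q hq =>
    ⟨hdoma q.1 (hfstK q hq), hdom q.1 (hfstK q hq) q.2 (hsndK q hq)⟩
  set D : ℝ → ℝ → ℝ := fun r s =>
    gga k H (a r) ((τ r - a r) * s + a r) * a' r
      + ggy k H (a r) ((τ r - a r) * s + a r) * ((τ' r - a' r) * s + a' r) with hD
  have hcontD : ContinuousOn (fun q : ℝ × ℝ => D q.1 q.2) K := by
    intro q hq
    have haux := aux_continuousAt k H hH (hmemS q hq).1 (hmemS q hq).2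
    have hmq : ContinuousWithinAt m K q := hcontm q hq
    have hga : ContinuousWithinAt (fun q : ℝ × ℝ => gga k H (m q).1 (m q).2) K q :=
      (haux.2.1).comp_continuousWithinAt hmq
    have hgy : ContinuousWithinAt (fun q : ℝ × ℝ => ggy k H (m q).1 (m q).2) K q :=
      (haux.2.2).comp_continuousWithinAt hmq
    have hta : ContinuousWithinAt (fun q : ℝ × ℝ => a' q.1) K q :=
      (hca.comp continuousOn_fst hfstK) q hq
    have htτ : ContinuousWithinAt (fun q : ℝ × ℝ => τ' q.1) K q :=
      (hcτ.comp continuousOn_fst hfstK) q hq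
    exact (hga.mul hta).add (hgy.mul (((htτ.sub hta).mul
      (continuous_snd.continuousWithinAt)).add hta))
  obtain ⟨C, hC⟩ := ((isCompact_closedBall r₀ ε).prod isCompact_Icc).exists_bound_of_continuousOn
    hcontD
  have hcontF : ∀ r ∈ closedBall r₀ ε,
      ContinuousOn (fun s => gg k H (a r) ((τ r - a r) * s + a r)) (Icc (0:ℝ) 1) := by
    intro r hr s hs
    have haux := aux_continuousAt k H hH (p := (a r, (τ r - a r) * s + a r))
      (hdoma r hr) (hdom r hr s hs)
    have hin : ContinuousWithinAt (fun s : ℝ => ((a r : ℝ), (τ r - a r) * s + a r))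
        (Icc (0:ℝ) 1) s :=
      (continuousWithinAt_const.prodMk
        (((continuousWithinAt_const.mul continuousWithinAt_id)).add continuousWithinAt_const))
    exact ContinuousAt.comp_continuousWithinAt
      (f := fun s : ℝ => ((a r : ℝ), (τ r - a r) * s + a r)) haux.1 hin
  have main := intervalIntegral.hasDerivAt_integral_of_dominated_loc_of_deriv_le
    (F := fun r s => gg k H (a r) ((τ r - a r) * s + a r)) (F' := D)
    (x₀ := r₀) (s := ball r₀ ε) (a := (0:ℝ)) (b := 1) (μ := volume) (bound := fun _ => C)
    (ball_mem_nhds r₀ hε) ?_ ?_ ?_ ?_ ?_ ?_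
  · exact main.2
  · filter_upwards [ball_mem_nhds r₀ hε] with r hr
    exact ((hcontF r (ball_subset_closedBall hr)).mono hIsub).aestronglyMeasurable
      measurableSet_uIoc
  · exact ((hcontF r₀ hr₀).mono (by rw [uIcc_of_le zero_le_one])).intervalIntegrable
  · have : ContinuousOn (fun s => D r₀ s) (Icc (0:ℝ) 1) := by
      intro s hs
      have hin : ContinuousWithinAt (fun s : ℝ => ((r₀ : ℝ), s)) (Icc (0:ℝ) 1) s :=
        continuousWithinAt_const.prodMk continuousWithinAt_id
      exact (hcontD (r₀, s) ⟨hr₀, hs⟩).comp hin (fun s' hs' => ⟨hr₀, hs'⟩)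
    exact (this.mono hIsub).aestronglyMeasurable measurableSet_uIoc
  · filter_upwards with s hs r hr
    exact hC (r, s) ⟨ball_subset_closedBall hr, hIsub hs⟩
  · exact intervalIntegrable_const
  · filter_upwards with s hs r hr
    have hr' : r ∈ closedBall r₀ ε := ball_subset_closedBall hr
    have ha : HasDerivAt a (a' r) r := (hball r hr').1
    have hτ : HasDerivAt τ (τ' r) r := (hball r hr').2
    have hg : HasDerivAt (fun r => (τ r - a r) * s + a r) ((τ' r - a' r) * s + a' r) r :=
      (((hτ.sub ha).mul_const s).add ha)
    exact gg_hasDerivAt_comp k H hH ha hg (hdoma r hr') (hdom r hr' s (hIsub hs))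

theorem integral_scale (f : ℝ → ℝ) (c : ℝ) :
    ∫ t in (0:ℝ)..c, f t = c * ∫ s in (0:ℝ)..1, f (c * s) := by
  have h := intervalIntegral.smul_integral_comp_mul_left (f := f) (a := (0:ℝ)) (b := 1) c
  simp only [smul_eq_mul, mul_zero, mul_one] at h
  exact h.symm

end CharacteristicsAux

/-- The method-of-characteristics formula
`x(u,θ) = u^(−k)·F(ξ) + csc^k θ·∫₀^{θ−ξ} H(sin(t+ξ)/sin ξ, t+ξ)·sin^k(t+ξ) dt`,
with `ξ = arcsin(sin θ/u)`, solves the initial value problem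
`u·cot θ·∂x/∂u + ∂x/∂θ + k·cot θ·x = H(u,θ)`, `x(1,θ) = F(θ)`,
on the domain where `0 < sin θ < u` (so the characteristic map is
invertible), the initial condition holding for `θ ∈ (0, π/2)`. -/
theorem characteristics_formula_solves_ivp (k : ℝ) (F : ℝ → ℝ) (H : ℝ → ℝ → ℝ)
    (hF : ContDiffOn ℝ 1 F (Set.Ioo 0 π))
    (hH : ContDiff ℝ 1 (fun p : ℝ × ℝ => H p.1 p.2))
    (x : ℝ → ℝ → ℝ)
    (hx : ∀ u θ : ℝ,
      x u θ = u ^ (-k) * F (Real.arcsin (Real.sin θ / u))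
        + (Real.sin θ) ^ (-k) *
          ∫ t in (0 : ℝ)..(θ - Real.arcsin (Real.sin θ / u)),
            H (Real.sin (t + Real.arcsin (Real.sin θ / u)) /
                Real.sin (Real.arcsin (Real.sin θ / u)))
              (t + Real.arcsin (Real.sin θ / u)) *
              (Real.sin (t + Real.arcsin (Real.sin θ / u))) ^ k) :
    (∀ u θ : ℝ, θ ∈ Set.Ioo 0 π → 0 < Real.sin θ → Real.sin θ < u →
      u * (Real.cos θ / Real.sin θ) * deriv (fun v => x v θ) u
        + deriv (fun t => x u t) θ
        + k * (Real.cos θ / Real.sin θ) * x u θ = H u θ) ∧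
    (∀ θ : ℝ, θ ∈ Set.Ioo 0 (π / 2) → x 1 θ = F θ) := by
  -- rewriting of the solution formula with a rescaled integral
  have hxN : ∀ v t : ℝ, x v t
      = v ^ (-k) * F (Real.arcsin (Real.sin t / v))
        + Real.sin t ^ (-k) * ((t - Real.arcsin (Real.sin t / v))
            * ∫ s in (0:ℝ)..1, GG k H (Real.arcsin (Real.sin t / v)) t s) := by
    intro v t
    rw [hx v t]
    congr 1
    have h := integral_scale (fun t' => gg k H (Real.arcsin (Real.sin t / v))
      (t' + Real.arcsin (Real.sin t / v))) (t - Real.arcsin (Real.sin t / v))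
    have h2 : (∫ t' in (0:ℝ)..(t - Real.arcsin (Real.sin t / v)),
        gg k H (Real.arcsin (Real.sin t / v)) (t' + Real.arcsin (Real.sin t / v)))
        = (t - Real.arcsin (Real.sin t / v))
            * ∫ s in (0:ℝ)..1, GG k H (Real.arcsin (Real.sin t / v)) t s := by
      rw [h]
      congr 1
    rw [← h2]
    rfl
  constructor
  · intro u θ hθ hs hsu
    -- basic positivity facts
    have hθ0 : 0 < θ := hθ.1
    have hθπ : θ < π := hθ.2
    have hu : 0 < u := lt_trans hs hsu
    have hr0 : 0 < Real.sin θ / u := div_pos hs hu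
    have hr1 : Real.sin θ / u < 1 := (div_lt_one hu).2 hsu
    have hrne1 : Real.sin θ / u ≠ 1 := ne_of_lt hr1
    have hrnem1 : Real.sin θ / u ≠ -1 := by linarith
    set a₀ : ℝ := Real.arcsin (Real.sin θ / u) with ha₀def
    have hsa₀ : Real.sin a₀ = Real.sin θ / u := Real.sin_arcsin (by linarith) hr1.le
    have ha₀pos : 0 < a₀ := Real.arcsin_pos.2 hr0
    have ha₀lt : a₀ < π / 2 := Real.arcsin_lt_pi_div_two.2 hr1
    have ha₀ltπ : a₀ < π := lt_trans ha₀lt (by linarith [Real.pi_pos])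
    set c₀ : ℝ := Real.sqrt (1 - (Real.sin θ / u) ^ 2) with hc₀def
    have hc₀pos : 0 < c₀ := Real.sqrt_pos.2 (by nlinarith)
    have hc₀ne : c₀ ≠ 0 := hc₀pos.ne'
    have hsθne : Real.sin θ ≠ 0 := hs.ne'
    have hune : u ≠ 0 := hu.ne'
    -- derivative of the characteristic variable in u
    set Au : ℝ := -Real.sin θ / (c₀ * u ^ 2) with hAudef
    have hAu : HasDerivAt (fun v => Real.arcsin (Real.sin θ / v)) Au u := by
      have hdiv : HasDerivAt (fun v : ℝ => Real.sin θ / v)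
          ((0 * u - Real.sin θ * 1) / u ^ 2) u :=
        (hasDerivAt_const u (Real.sin θ)).div (hasDerivAt_id u) hune
      have h := (Real.hasDerivAt_arcsin hrnem1 hrne1).comp u hdiv
      refine h.congr_deriv ?_
      rw [hAudef, hc₀def]
      field_simp
      ring
    -- derivative of the characteristic variable in θ, on a neighborhood
    set αd : ℝ → ℝ := fun t => Real.cos t / (Real.sqrt (1 - (Real.sin t / u) ^ 2) * u)
      with hαddef
    set Aθ : ℝ := αd θ with hAθdef
    -- good neighborhood for the θ-direction
    have hUopen : IsOpen {t : ℝ | 0 < t ∧ t < π ∧ 0 < Real.sin t ∧ Real.sin t < u} := by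
      have h1 : IsOpen {t : ℝ | 0 < t} := isOpen_lt continuous_const continuous_id
      have h2 : IsOpen {t : ℝ | t < π} := isOpen_lt continuous_id continuous_const
      have h3 : IsOpen {t : ℝ | 0 < Real.sin t} := isOpen_lt continuous_const Real.continuous_sin
      have h4 : IsOpen {t : ℝ | Real.sin t < u} := isOpen_lt Real.continuous_sin continuous_const
      exact h1.and (h2.and (h3.and h4))
    have hθU : θ ∈ {t : ℝ | 0 < t ∧ t < π ∧ 0 < Real.sin t ∧ Real.sin t < u} :=
      ⟨hθ0, hθπ, hs, hsu⟩
    obtain ⟨ε₂, hε₂pos, hball₂⟩ := Metric.isOpen_iff.1 hUopen θ hθU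
    set εθ : ℝ := ε₂ / 2 with hεθdef
    have hεθpos : 0 < εθ := by positivity
    have hcbU : ∀ t ∈ closedBall θ εθ,
        0 < t ∧ t < π ∧ 0 < Real.sin t ∧ Real.sin t < u := by
      intro t ht
      exact hball₂ ((closedBall_subset_ball (by linarith)) ht)
    -- derivative of α on the closed ball
    have hαball : ∀ t ∈ closedBall θ εθ,
        HasDerivAt (fun t => Real.arcsin (Real.sin t / u)) (αd t) t := by
      intro t ht
      obtain ⟨h1, h2, h3, h4⟩ := hcbU t ht
      have hq0 : 0 < Real.sin t / u := div_pos h3 hu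
      have hq1 : Real.sin t / u < 1 := (div_lt_one hu).2 h4
      have hdiv : HasDerivAt (fun t : ℝ => Real.sin t / u) (Real.cos t / u) t :=
        (Real.hasDerivAt_sin t).div_const u
      have h := (Real.hasDerivAt_arcsin (by linarith) (ne_of_lt hq1)).comp t hdiv
      have hsq : Real.sqrt (1 - (Real.sin t / u) ^ 2) ≠ 0 :=
        (Real.sqrt_pos.2 (by nlinarith)).ne'
      refine h.congr_deriv ?_
      rw [hαddef]
      rw [div_mul_div_comm, one_mul]
    have hAθball : HasDerivAt (fun t => Real.arcsin (Real.sin t / u)) Aθ θ :=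
      hαball θ (mem_closedBall_self hεθpos.le)
    -- membership of intermediate points in (0, π)
    have hybound : ∀ b t : ℝ, 0 < b → b < π → 0 < t → t < π →
        ∀ s ∈ Icc (0:ℝ) 1, Real.sin ((t - b) * s + b) ≠ 0 := by
      intro b t hb1 hb2 ht1 ht2 s hsI
      have h1 : 0 < (t - b) * s + b := by
        rcases le_total b t with h | h
        · nlinarith [hsI.1, hsI.2]
        · nlinarith [hsI.1, hsI.2]
      have h2 : (t - b) * s + b < π := by
        rcases le_total b t with h | h
        · nlinarith [hsI.1, hsI.2]
        · nlinarith [hsI.1, hsI.2]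
      exact (Real.sin_pos_of_pos_of_lt_pi h1 h2).ne'
    -- the three fixed integrals
    set I₀ : ℝ := ∫ s in (0:ℝ)..1, GG k H a₀ θ s with hI₀def
    set e₁ : ℝ → ℝ := fun s => gga k H a₀ ((θ - a₀) * s + a₀) with he₁def
    set e₂ : ℝ → ℝ := fun s => ggy k H a₀ ((θ - a₀) * s + a₀) with he₂def
    set E : ℝ := ∫ s in (0:ℝ)..1, (e₁ s + e₂ s * (1 - s)) with hEdef
    set Eθ : ℝ := ∫ s in (0:ℝ)..1, e₂ s * s with hEθdef
    -- continuity of e₁, e₂ and the integrand on [0,1]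
    have hsina₀ : Real.sin a₀ ≠ 0 := (Real.sin_pos_of_pos_of_lt_pi ha₀pos ha₀ltπ).ne'
    have hyne : ∀ s ∈ Icc (0:ℝ) 1, Real.sin ((θ - a₀) * s + a₀) ≠ 0 :=
      hybound a₀ θ ha₀pos ha₀ltπ hθ0 hθπ
    have hcont3 : ∀ s ∈ Icc (0:ℝ) 1,
        ContinuousWithinAt (fun s => GG k H a₀ θ s) (Icc (0:ℝ) 1) s ∧
        ContinuousWithinAt e₁ (Icc (0:ℝ) 1) s ∧
        ContinuousWithinAt e₂ (Icc (0:ℝ) 1) s := by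
      intro s hsI
      have haux := aux_continuousAt k H hH (p := (a₀, (θ - a₀) * s + a₀)) hsina₀ (hyne s hsI)
      have hin : ContinuousWithinAt (fun s : ℝ => ((a₀ : ℝ), (θ - a₀) * s + a₀))
          (Icc (0:ℝ) 1) s :=
        continuousWithinAt_const.prodMk
          ((continuousWithinAt_const.mul continuousWithinAt_id).add continuousWithinAt_const)
      exact ⟨ContinuousAt.comp_continuousWithinAt
          (f := fun s : ℝ => ((a₀ : ℝ), (θ - a₀) * s + a₀)) haux.1 hin,
        ContinuousAt.comp_continuousWithinAt
          (f := fun s : ℝ => ((a₀ : ℝ), (θ - a₀) * s + a₀)) haux.2.1 hin,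
        ContinuousAt.comp_continuousWithinAt
          (f := fun s : ℝ => ((a₀ : ℝ), (θ - a₀) * s + a₀)) haux.2.2 hin⟩
    have hGGint : IntervalIntegrable (fun s => GG k H a₀ θ s) volume 0 1 :=
      (ContinuousOn.intervalIntegrable (by
        rw [uIcc_of_le zero_le_one]; exact fun s hsI => (hcont3 s hsI).1))
    have he₁int : IntervalIntegrable e₁ volume 0 1 :=
      (ContinuousOn.intervalIntegrable (by
        rw [uIcc_of_le zero_le_one]; exact fun s hsI => (hcont3 s hsI).2.1))
    have he₂int : IntervalIntegrable e₂ volume 0 1 :=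
      (ContinuousOn.intervalIntegrable (by
        rw [uIcc_of_le zero_le_one]; exact fun s hsI => (hcont3 s hsI).2.2))
    have he₂sint : IntervalIntegrable (fun s => e₂ s * s) volume 0 1 :=
      he₂int.mul_continuousOn (continuous_id.continuousOn)
    have hEint : IntervalIntegrable (fun s => e₁ s + e₂ s * (1 - s)) volume 0 1 :=
      he₁int.add (he₂int.mul_continuousOn (by fun_prop))
    -- derivative of Q(a) = ∫ s in 0..1, GG k H a θ s  at a₀
    set εa : ℝ := min a₀ (π / 2 - a₀) / 2 with hεadef
    have hεapos : 0 < εa := by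
      have := ha₀lt
      rw [hεadef]
      have h1 : 0 < min a₀ (π / 2 - a₀) := lt_min ha₀pos (by linarith)
      linarith
    have hcba : ∀ r ∈ closedBall a₀ εa, 0 < r ∧ r < π := by
      intro r hr
      rw [mem_closedBall, Real.dist_eq, abs_le] at hr
      have h1 : min a₀ (π / 2 - a₀) ≤ a₀ := min_le_left _ _
      have h2 : min a₀ (π / 2 - a₀) ≤ π / 2 - a₀ := min_le_right _ _
      constructor
      · rw [hεadef] at hr; linarith [hr.1]
      · rw [hεadef] at hr
        have := Real.pi_pos
        have : r ≤ a₀ + (π / 2 - a₀) / 2 := by linarith [hr.2]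
        linarith
    have hQ : HasDerivAt (fun aa : ℝ => ∫ s in (0:ℝ)..1, GG k H aa θ s) E a₀ := by
      have h := param_hasDerivAt k H hH (fun r => r) (fun _ => θ) (fun _ => 1) (fun _ => 0)
        a₀ εa hεapos
        (fun r _ => ⟨hasDerivAt_id r, hasDerivAt_const r θ⟩)
        continuousOn_const continuousOn_const
        (fun r hr => (Real.sin_pos_of_pos_of_lt_pi (hcba r hr).1 (hcba r hr).2).ne')
        (fun r hr s hsI => hybound r θ (hcba r hr).1 (hcba r hr).2 hθ0 hθπ s hsI)
      have hval : (∫ s in (0:ℝ)..1,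
          (gga k H a₀ ((θ - a₀) * s + a₀) * 1
            + ggy k H a₀ ((θ - a₀) * s + a₀) * ((0 - 1) * s + 1))) = E := by
        rw [hEdef]
        apply intervalIntegral.integral_congr
        intro s _
        simp only [he₁def, he₂def]
        ring
      rw [← hval]
      exact h
    -- derivative of R(t) = ∫ s in 0..1, GG k H (arcsin (sin t / u)) t s  at θ
    have hR : HasDerivAt (fun t : ℝ => ∫ s in (0:ℝ)..1, GG k H (Real.arcsin (Real.sin t / u)) t s)
        (Aθ * E + Eθ) θ := by
      have hsqcont : Continuous (fun t : ℝ => Real.sqrt (1 - (Real.sin t / u) ^ 2)) :=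
        Real.continuous_sqrt.comp (by fun_prop)
      have hαdcont : ContinuousOn αd (closedBall θ εθ) := by
        rw [hαddef]
        apply ContinuousOn.div Real.continuous_cos.continuousOn
          (hsqcont.mul continuous_const).continuousOn
        intro t ht
        obtain ⟨h1, h2, h3, h4⟩ := hcbU t ht
        have hq1 : Real.sin t / u < 1 := (div_lt_one hu).2 h4
        have hq0 : 0 < Real.sin t / u := div_pos h3 hu
        exact mul_ne_zero (Real.sqrt_pos.2 (by nlinarith)).ne' hune
      have h := param_hasDerivAt k H hH (fun t => Real.arcsin (Real.sin t / u)) (fun t => t)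
        αd (fun _ => 1) θ εθ hεθpos
        (fun t ht => ⟨hαball t ht, hasDerivAt_id t⟩)
        hαdcont continuousOn_const
        (fun t ht => by
          obtain ⟨h1, h2, h3, h4⟩ := hcbU t ht
          rw [Real.sin_arcsin (by nlinarith [div_pos h3 hu]) ((div_lt_one hu).2 h4).le]
          exact (div_pos h3 hu).ne')
        (fun t ht s hsI => by
          obtain ⟨h1, h2, h3, h4⟩ := hcbU t ht
          exact hybound (Real.arcsin (Real.sin t / u)) t
            (Real.arcsin_pos.2 (div_pos h3 hu))
            (lt_of_le_of_lt (Real.arcsin_le_pi_div_two _) (by linarith [Real.pi_pos]))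
            h1 h2 s hsI)
      have hval : (∫ s in (0:ℝ)..1,
          (gga k H a₀ ((θ - a₀) * s + a₀) * αd θ
            + ggy k H a₀ ((θ - a₀) * s + a₀) * ((1 - αd θ) * s + αd θ))) = Aθ * E + Eθ := by
        rw [hAθdef, hEdef, hEθdef]
        rw [← intervalIntegral.integral_const_mul, ← intervalIntegral.integral_add
          (hEint.const_mul _) he₂sint]
        apply intervalIntegral.integral_congr
        intro s _
        simp only [he₁def, he₂def]
        ring
      rw [← hval]
      exact h
    -- the fundamental identity  I₀ + (θ - a₀) * Eθ = H u θ * sin θ ^ k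
    have hFTC : ∀ s ∈ uIcc (0:ℝ) 1, HasDerivAt (fun σ => σ * GG k H a₀ θ σ)
        (GG k H a₀ θ s + e₂ s * s * (θ - a₀)) s := by
      intro s hsI
      rw [uIcc_of_le zero_le_one] at hsI
      have hin : HasDerivAt (fun σ : ℝ => (θ - a₀) * σ + a₀) (θ - a₀) s := by
        simpa using ((hasDerivAt_id s).const_mul (θ - a₀)).add_const a₀
      have hgg := gg_hasDerivAt_comp k H hH (hasDerivAt_const s a₀) hin hsina₀ (hyne s hsI)
      have hprod := (hasDerivAt_id s).mul hgg
      refine hprod.congr_deriv ?_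
      simp only [he₂def, GG, id]
      ring
    have hFTCint : IntervalIntegrable (fun s => GG k H a₀ θ s + e₂ s * s * (θ - a₀))
        volume 0 1 := hGGint.add (he₂sint.mul_const _)
    have hsum := intervalIntegral.integral_eq_sub_of_hasDerivAt hFTC hFTCint
    have hkey : I₀ + (θ - a₀) * Eθ = H u θ * Real.sin θ ^ k := by
      have h1 : ∫ s in (0:ℝ)..1, (GG k H a₀ θ s + e₂ s * s * (θ - a₀))
          = I₀ + Eθ * (θ - a₀) := by
        rw [intervalIntegral.integral_add hGGint (he₂sint.mul_const _),
          intervalIntegral.integral_mul_const]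
      have h2 : GG k H a₀ θ 1 = H u θ * Real.sin θ ^ k := by
        simp only [GG, gg]
        rw [show (θ - a₀) * 1 + a₀ = θ by ring, hsa₀,
          show Real.sin θ / (Real.sin θ / u) = u from by field_simp]
      rw [h1] at hsum
      simp only [one_mul, zero_mul, sub_zero] at hsum
      rw [h2] at hsum
      linarith [hsum]
    -- derivative of F at a₀
    have ha₀mem : a₀ ∈ Ioo 0 π := ⟨ha₀pos, ha₀ltπ⟩
    have hFd : HasDerivAt F (deriv F a₀) a₀ :=
      ((hF.differentiableOn one_ne_zero).differentiableAt (isOpen_Ioo.mem_nhds ha₀mem)).hasDerivAt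
    set Fd : ℝ := deriv F a₀ with hFddef
    -- assembled derivative in the u-direction
    have hrpowu : HasDerivAt (fun v : ℝ => v ^ (-k)) (-k * u ^ (-k - 1)) u :=
      Real.hasDerivAt_rpow_const (Or.inl hune)
    have hDu := (hrpowu.mul (hFd.comp u hAu)).add
      (((hAu.const_sub θ).mul (hQ.comp u hAu)).const_mul (Real.sin θ ^ (-k)))
    have hderivu : deriv (fun v : ℝ => v ^ (-k) * F (Real.arcsin (Real.sin θ / v))
          + Real.sin θ ^ (-k) * ((θ - Real.arcsin (Real.sin θ / v))
            * ∫ s in (0:ℝ)..1, GG k H (Real.arcsin (Real.sin θ / v)) θ s)) u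
        = -k * u ^ (-k - 1) * F a₀ + u ^ (-k) * (Fd * Au)
          + Real.sin θ ^ (-k) * (-Au * I₀ + (θ - a₀) * (E * Au)) := by
      exact hDu.deriv
    -- assembled derivative in the θ-direction
    have hsk : HasDerivAt (fun t : ℝ => Real.sin t ^ (-k))
        (-k * Real.sin θ ^ (-k - 1) * Real.cos θ) θ :=
      (Real.hasDerivAt_rpow_const (Or.inl hsθne)).comp θ (Real.hasDerivAt_sin θ)
    have hDθ := ((hFd.comp θ hAθball).const_mul (u ^ (-k))).add
      (hsk.mul (((hasDerivAt_id θ).sub hAθball).mul hR))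
    have hderivθ : deriv (fun t : ℝ => u ^ (-k) * F (Real.arcsin (Real.sin t / u))
          + Real.sin t ^ (-k) * ((t - Real.arcsin (Real.sin t / u))
            * ∫ s in (0:ℝ)..1, GG k H (Real.arcsin (Real.sin t / u)) t s)) θ
        = u ^ (-k) * (Fd * Aθ)
          + (-k * Real.sin θ ^ (-k - 1) * Real.cos θ * ((θ - a₀) * I₀)
            + Real.sin θ ^ (-k) * ((1 - Aθ) * I₀ + (θ - a₀) * (Aθ * E + Eθ))) := by
      exact hDθ.deriv
    -- final algebra
    have hfun_u : (fun v => x v θ) = fun v : ℝ => v ^ (-k) * F (Real.arcsin (Real.sin θ / v))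
        + Real.sin θ ^ (-k) * ((θ - Real.arcsin (Real.sin θ / v))
          * ∫ s in (0:ℝ)..1, GG k H (Real.arcsin (Real.sin θ / v)) θ s) :=
      funext fun v => hxN v θ
    have hfun_θ : (fun t => x u t) = fun t : ℝ => u ^ (-k) * F (Real.arcsin (Real.sin t / u))
        + Real.sin t ^ (-k) * ((t - Real.arcsin (Real.sin t / u))
          * ∫ s in (0:ℝ)..1, GG k H (Real.arcsin (Real.sin t / u)) t s) :=
      funext fun t => hxN u t
    rw [hfun_u, hfun_θ, hderivu, hderivθ, hxN u θ]
    have hST : Real.sin θ ^ (-k) * Real.sin θ ^ k = 1 := by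
      rw [← Real.rpow_add hs]
      simp
    have hkey' : Real.sin θ ^ (-k) * (I₀ + (θ - a₀) * Eθ) = H u θ := by
      rw [hkey, show Real.sin θ ^ (-k) * (H u θ * Real.sin θ ^ k)
        = H u θ * (Real.sin θ ^ (-k) * Real.sin θ ^ k) from by ring, hST, mul_one]
    rw [← hkey']
    rw [Real.rpow_sub_one hune, Real.rpow_sub_one hsθne]
    rw [← ha₀def]
    simp only [hAudef, hAθdef, hαddef]
    rw [← hc₀def]
    field_simp
    ring


  · intro θ hθ
    rw [hxN 1 θ]
    have h1 : Real.sin θ / 1 = Real.sin θ := div_one _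
    have h2 : Real.arcsin (Real.sin θ) = θ :=
      Real.arcsin_sin (by linarith [hθ.1, Real.pi_div_two_pos]) hθ.2.le
    rw [h1, h2]
    simp [Real.one_rpow]
end

section
/- If M(u,θ) satisfies the homogeneous boost-rotation mass-aspect constraint u·cot θ·∂_u M + ∂_θ M + 3·cot θ·M = 0 on u > 0, 0 < θ < π, then M(u,θ) = u^{−3}·F(sin θ/u) for some function F; conversely any M of this form with F ∈ C¹ satisfies the constraint. -/
open Real


private lemma mass_aspect_part1 (F : ℝ → ℝ) (hF : ContDiff ℝ 1 F)
    (u θ : ℝ) (hu : 0 < u) (hθ : θ ∈ Set.Ioo 0 π) :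
    u * (Real.cos θ / Real.sin θ) *
        deriv (fun v => v ^ (-(3 : ℝ)) * F (Real.sin θ / v)) u
      + deriv (fun t => u ^ (-(3 : ℝ)) * F (Real.sin t / u)) θ
      + 3 * (Real.cos θ / Real.sin θ) * (u ^ (-(3 : ℝ)) * F (Real.sin θ / u))
      = 0 := by
  have hs : 0 < Real.sin θ := Real.sin_pos_of_pos_of_lt_pi hθ.1 hθ.2
  have hF' : ∀ y : ℝ, HasDerivAt F (deriv F y) y := fun y =>
    ((hF.differentiable one_ne_zero) y).hasDerivAt
  set s := Real.sin θ with hsdef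
  -- u-derivative
  have h1 : HasDerivAt (fun v : ℝ => v ^ (-(3:ℝ))) (-3 * u ^ (-(3:ℝ) - 1)) u := by
    simpa using Real.hasDerivAt_rpow_const (p := -(3:ℝ)) (Or.inl hu.ne')
  have h2 : HasDerivAt (fun v : ℝ => s / v) (s * -(u ^ 2)⁻¹) u := by
    simpa [div_eq_mul_inv] using (hasDerivAt_inv hu.ne').const_mul s
  have h3 : HasDerivAt (fun v : ℝ => F (s / v)) (deriv F (s / u) * (s * -(u ^ 2)⁻¹)) u :=
    (hF' (s / u)).comp u h2
  have hU : HasDerivAt (fun v : ℝ => v ^ (-(3:ℝ)) * F (s / v))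
      (-3 * u ^ (-(3:ℝ) - 1) * F (s / u) +
        u ^ (-(3:ℝ)) * (deriv F (s / u) * (s * -(u ^ 2)⁻¹))) u := h1.mul h3
  -- θ-derivative
  have h4 : HasDerivAt (fun t : ℝ => Real.sin t / u) (Real.cos θ / u) θ :=
    (Real.hasDerivAt_sin θ).div_const u
  have h5 : HasDerivAt (fun t : ℝ => F (Real.sin t / u))
      (deriv F (s / u) * (Real.cos θ / u)) θ := (hF' (s / u)).comp θ h4
  have hT : HasDerivAt (fun t : ℝ => u ^ (-(3:ℝ)) * F (Real.sin t / u))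
      (u ^ (-(3:ℝ)) * (deriv F (s / u) * (Real.cos θ / u))) θ := h5.const_mul _
  rw [hU.deriv, hT.deriv]
  have e1 : u ^ (-(3:ℝ)) = (u ^ 3)⁻¹ := by
    rw [Real.rpow_neg hu.le, show (3:ℝ) = ((3:ℕ):ℝ) by norm_num, Real.rpow_natCast]
  have e2 : u ^ (-(3:ℝ) - 1) = (u ^ 4)⁻¹ := by
    rw [show -(3:ℝ) - 1 = -(4:ℝ) by norm_num, Real.rpow_neg hu.le,
      show (4:ℝ) = ((4:ℕ):ℝ) by norm_num, Real.rpow_natCast]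
  rw [e1, e2]
  field_simp
  ring


private lemma mass_aspect_part2 (M : ℝ → ℝ → ℝ)
    (hM : ContDiffOn ℝ 1 (fun p : ℝ × ℝ => M p.1 p.2) (Set.Ioi 0 ×ˢ Set.Ioo 0 π))
    (hE : ∀ u θ : ℝ, 0 < u → θ ∈ Set.Ioo 0 π →
      u * (Real.cos θ / Real.sin θ) * deriv (fun v => M v θ) u
        + deriv (fun t => M u t) θ
        + 3 * (Real.cos θ / Real.sin θ) * M u θ = 0) :
    ∃ F : ℝ → ℝ, ∀ u θ : ℝ, 0 < u → θ ∈ Set.Ioo 0 π →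
      M u θ = u ^ (-(3 : ℝ)) * F (Real.sin θ / u) := by
  set f : ℝ × ℝ → ℝ := fun p => M p.1 p.2 with hf
  set S : Set (ℝ × ℝ) := Set.Ioi 0 ×ˢ Set.Ioo 0 π with hS
  have hSopen : IsOpen S := (isOpen_Ioi).prod isOpen_Ioo
  -- key: for c > 0, the function g is constant on Ioo 0 π
  have key : ∀ c : ℝ, 0 < c → ∀ t ∈ Set.Ioo 0 π,
      HasDerivAt (fun t : ℝ => (c * Real.sin t) ^ 3 * M (c * Real.sin t) t) 0 t := by
    intro c hc t ht
    have hst : 0 < Real.sin t := Real.sin_pos_of_pos_of_lt_pi ht.1 ht.2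
    have hut : 0 < c * Real.sin t := mul_pos hc hst
    have hpS : ((c * Real.sin t, t) : ℝ × ℝ) ∈ S := ⟨hut, ht⟩
    have hd : DifferentiableAt ℝ f (c * Real.sin t, t) :=
      (hM.differentiableOn one_ne_zero).differentiableAt (hSopen.mem_nhds hpS)
    set L := fderiv ℝ f (c * Real.sin t, t) with hL
    -- partial derivatives
    have hcurve1 : HasDerivAt (fun v : ℝ => ((v, t) : ℝ × ℝ)) (1, 0) (c * Real.sin t) :=
      (hasDerivAt_id _).prodMk (hasDerivAt_const _ _)
    have hpart1 : HasDerivAt (fun v => M v t) (L (1, 0)) (c * Real.sin t) :=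
      HasFDerivAt.comp_hasDerivAt (x := c * Real.sin t) (f := fun v : ℝ => ((v, t) : ℝ × ℝ))
        (hf := hcurve1) (hl := hd.hasFDerivAt)
    have hcurve2 : HasDerivAt (fun s : ℝ => ((c * Real.sin t, s) : ℝ × ℝ)) (0, 1) t :=
      (hasDerivAt_const _ _).prodMk (hasDerivAt_id _)
    have hpart2 : HasDerivAt (fun s => M (c * Real.sin t) s) (L (0, 1)) t :=
      HasFDerivAt.comp_hasDerivAt (x := t) (hf := hcurve2) (hl := hd.hasFDerivAt)
    -- curve γ
    have hγ : HasDerivAt (fun s : ℝ => ((c * Real.sin s, s) : ℝ × ℝ)) (c * Real.cos t, 1) t :=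
      ((Real.hasDerivAt_sin t).const_mul c).prodMk (hasDerivAt_id t)
    obtain ⟨γ, hγdef⟩ : ∃ γ : ℝ → ℝ × ℝ, γ = fun s : ℝ => ((c * Real.sin s, s) : ℝ × ℝ) :=
      ⟨_, rfl⟩
    have hγ2 : HasDerivAt γ (c * Real.cos t, 1) t := hγdef ▸ hγ
    have hd2 : HasFDerivAt f L (γ t) := by rw [hγdef]; exact hd.hasFDerivAt
    have hcomp0 := hd2.comp_hasDerivAt t hγ2
    have hcomp : HasDerivAt (fun s : ℝ => M (c * Real.sin s) s) (L (c * Real.cos t, 1)) t := by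
      rw [hγdef] at hcomp0; exact hcomp0
    have hLval : L (c * Real.cos t, 1) = c * Real.cos t * L (1, 0) + L (0, 1) := by
      have : ((c * Real.cos t, 1) : ℝ × ℝ)
          = (c * Real.cos t) • ((1, 0) : ℝ × ℝ) + (0, 1) := by
        simp [Prod.ext_iff]
      rw [this, map_add, map_smul]; simp [smul_eq_mul]
    have hpow : HasDerivAt (fun s : ℝ => (c * Real.sin s) ^ 3)
        (3 * (c * Real.sin t) ^ 2 * (c * Real.cos t)) t := by
      have := ((Real.hasDerivAt_sin t).const_mul c).fun_pow 3
      simpa [mul_comm, mul_assoc, mul_left_comm] using this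
    have hprod := hpow.fun_mul hcomp
    -- use the PDE to show the derivative is 0
    have hEq := hE (c * Real.sin t) t hut ht
    rw [hpart1.deriv, hpart2.deriv] at hEq
    have goal0 : (3 * (c * Real.sin t) ^ 2 * (c * Real.cos t)) * M (c * Real.sin t) t
        + (c * Real.sin t) ^ 3 * L (c * Real.cos t, 1) = 0 := by
      rw [hLval]
      field_simp at hEq
      linear_combination (c * Real.sin t) ^ 2 * c * hEq
    simpa [goal0] using hprod
  -- define F
  refine ⟨fun s => (s⁻¹) ^ 3 * M s⁻¹ (π / 2), ?_⟩
  intro u θ hu hθ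
  have hs : 0 < Real.sin θ := Real.sin_pos_of_pos_of_lt_pi hθ.1 hθ.2
  set c : ℝ := u / Real.sin θ with hc
  have hcpos : 0 < c := div_pos hu hs
  set g : ℝ → ℝ := fun t => (c * Real.sin t) ^ 3 * M (c * Real.sin t) t with hg
  have hgconst : g θ = g (π / 2) := by
    have hconv : Convex ℝ (Set.Ioo (0:ℝ) π) := convex_Ioo 0 π
    have hdiff : DifferentiableOn ℝ g (Set.Ioo 0 π) := fun t ht =>
      ((key c hcpos t ht).differentiableAt).differentiableWithinAt
    refine hconv.is_const_of_fderivWithin_eq_zero hdiff (fun t ht => ?_) hθ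
      ⟨by positivity, by linarith [Real.pi_gt_three]⟩
    have h0 : fderiv ℝ g t = 0 := by
      rw [(key c hcpos t ht).hasFDerivAt.fderiv]
      exact ContinuousLinearMap.ext fun x => by
        simp [ContinuousLinearMap.smulRight_apply]
    rw [fderivWithin_of_isOpen isOpen_Ioo ht, h0]
  have hcu : c * Real.sin θ = u := by rw [hc]; field_simp
  have hinv : (Real.sin θ / u)⁻¹ = c := by rw [hc]; field_simp
  have h1 : g θ = u ^ 3 * M u θ := by rw [hg]; simp [hcu]
  have h2 : g (π / 2) = c ^ 3 * M c (π / 2) := by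
    rw [hg]; simp [Real.sin_pi_div_two]
  have hne : (u : ℝ) ^ 3 ≠ 0 := by positivity
  have hrpow : u ^ (-(3:ℝ)) = (u ^ 3)⁻¹ := by
    rw [Real.rpow_neg hu.le, show (3:ℝ) = ((3:ℕ):ℝ) by norm_num, Real.rpow_natCast]
  rw [h1, h2] at hgconst
  rw [hrpow]
  show M u θ = (u ^ 3)⁻¹ * ((Real.sin θ / u)⁻¹ ^ 3 * M (Real.sin θ / u)⁻¹ (π / 2))
  rw [hinv]
  field_simp
  linarith [hgconst]

/-- The homogeneous boost-rotation mass-aspect constraint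
`u·cot θ·∂_u M + ∂_θ M + 3·cot θ·M = 0` on `{u > 0, 0 < θ < π}` is solved
exactly by `M(u,θ) = u⁻³·F(sin θ/u)`: any `M` of this form with `F ∈ C¹`
satisfies the constraint, and conversely any `C¹` solution is of this
form. -/
theorem mass_aspect_constraint_general_solution :
    (∀ F : ℝ → ℝ, ContDiff ℝ 1 F →
      ∀ u θ : ℝ, 0 < u → θ ∈ Set.Ioo 0 π →
        u * (Real.cos θ / Real.sin θ) *
            deriv (fun v => v ^ (-(3 : ℝ)) * F (Real.sin θ / v)) u
          + deriv (fun t => u ^ (-(3 : ℝ)) * F (Real.sin t / u)) θ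
          + 3 * (Real.cos θ / Real.sin θ) * (u ^ (-(3 : ℝ)) * F (Real.sin θ / u))
          = 0) ∧
    (∀ M : ℝ → ℝ → ℝ,
      ContDiffOn ℝ 1 (fun p : ℝ × ℝ => M p.1 p.2)
        (Set.Ioi 0 ×ˢ Set.Ioo 0 π) →
      (∀ u θ : ℝ, 0 < u → θ ∈ Set.Ioo 0 π →
        u * (Real.cos θ / Real.sin θ) * deriv (fun v => M v θ) u
          + deriv (fun t => M u t) θ
          + 3 * (Real.cos θ / Real.sin θ) * M u θ = 0) →
      ∃ F : ℝ → ℝ, ∀ u θ : ℝ, 0 < u → θ ∈ Set.Ioo 0 π →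
        M u θ = u ^ (-(3 : ℝ)) * F (Real.sin θ / u)) := by
  exact ⟨fun F hF u θ hu hθ => mass_aspect_part1 F hF u θ hu hθ,
    fun M hM hE => mass_aspect_part2 M hM hE⟩
end
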